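/- Let n ≥ 2 and let δ = a_{n,n−1} a_{n−1,n−2} ⋯ a_{2,1} ∈ B_n be the fundamental braid. Then for every pair of integers with n ≥ t > s ≥ 1, the element δ · a_{t,s}^{−1} lies in the submonoid of B_n generated by the band generators {a_{k,j} : n ≥ k > j ≥ 1}; equivalently, there is a positive word P_{t,s} in the band generators such that a_{t,s}^{−1} = δ^{−1} P_{t,s} in B_n. -/
import Mathlib


/-- Relations for the Artin presentation of the braid group `B n`.
Generators are indexed by `Fin (n-1)`, with index `i` representing `σ_{i+1}`. -/
def braidRels (n : ℕ) : Set (FreeGroup (Fin (n - 1))) :=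
  { r | (∃ i j : Fin (n - 1), (i : ℕ) + 2 ≤ (j : ℕ) ∧
          r = FreeGroup.of i * FreeGroup.of j * (FreeGroup.of i)⁻¹ * (FreeGroup.of j)⁻¹) ∨
        (∃ i j : Fin (n - 1), (j : ℕ) = (i : ℕ) + 1 ∧
          r = FreeGroup.of i * FreeGroup.of j * FreeGroup.of i *
              (FreeGroup.of j * FreeGroup.of i * FreeGroup.of j)⁻¹) }

/-- The braid group `B n` on `n` strands, as a presented group. -/
abbrev BraidGroup (n : ℕ) : Type := PresentedGroup (braidRels n)

/-- The Artin generator `σ_i` of `B n`, for `1 ≤ i ≤ n - 1` (junk value `1` otherwise). -/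
def braidGen (n i : ℕ) : BraidGroup n :=
  if h : i - 1 < n - 1 then PresentedGroup.of ⟨i - 1, h⟩ else 1

/-- The conjugating word `σ_{t-1} σ_{t-2} ⋯ σ_{s+1}` used to define band generators. -/
def bandConj (n t s : ℕ) : BraidGroup n :=
  ((List.range (t - 1 - s)).map (fun k => braidGen n (t - 1 - k))).prod

/-- The band generator `a_{t,s} = (σ_{t-1} ⋯ σ_{s+1}) σ_s (σ_{t-1} ⋯ σ_{s+1})⁻¹` of `B n`. -/
def band (n t s : ℕ) : BraidGroup n :=
  bandConj n t s * braidGen n s * (bandConj n t s)⁻¹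

/-- The fundamental braid `δ = a_{n,n-1} a_{n-1,n-2} ⋯ a_{2,1}` in `B n`. -/
def fundamentalBraid (n : ℕ) : BraidGroup n :=
  ((List.range (n - 1)).map (fun k => band n (n - k) (n - k - 1))).prod

/-- The submonoid of `B n` generated by the band generators `a_{t,s}`, `n ≥ t > s ≥ 1`. -/
def bandSubmonoid (n : ℕ) : Submonoid (BraidGroup n) :=
  Submonoid.closure { x | ∃ t s : ℕ, t ≤ n ∧ s < t ∧ 1 ≤ s ∧ x = band n t s }

lemma braid_rel_one {n : ℕ} {r : FreeGroup (Fin (n-1))} (hr : r ∈ braidRels n) :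
    PresentedGroup.mk (braidRels n) r = 1 :=
  (QuotientGroup.eq_one_iff r).mpr (Subgroup.subset_normalClosure hr)

lemma gen_eq {n : ℕ} (i : ℕ) (h : i - 1 < n - 1) :
    braidGen n i = PresentedGroup.mk (braidRels n) (FreeGroup.of ⟨i - 1, h⟩) := by
  rw [braidGen, dif_pos h]; rfl

lemma gen_comm {n : ℕ} (i j : ℕ) (h1 : 1 ≤ i) (h2 : i + 2 ≤ j) (h3 : j ≤ n - 1) :
    Commute (braidGen n i) (braidGen n j) := by
  have hi : i - 1 < n - 1 := by omega
  have hj : j - 1 < n - 1 := by omega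
  have key := braid_rel_one (n := n) (r := FreeGroup.of (⟨i-1, hi⟩ : Fin (n-1)) *
      FreeGroup.of ⟨j-1, hj⟩ * (FreeGroup.of ⟨i-1, hi⟩)⁻¹ * (FreeGroup.of ⟨j-1, hj⟩)⁻¹)
    (Or.inl ⟨⟨i-1, hi⟩, ⟨j-1, hj⟩, by simp; omega, rfl⟩)
  simp only [map_mul, map_inv] at key
  rw [mul_inv_eq_one] at key
  rw [Commute, SemiconjBy, gen_eq i hi, gen_eq j hj]
  exact mul_inv_eq_iff_eq_mul.mp key

lemma gen_braid {n : ℕ} (i : ℕ) (h1 : 1 ≤ i) (h2 : i + 2 ≤ n) :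
    braidGen n i * braidGen n (i+1) * braidGen n i
      = braidGen n (i+1) * braidGen n i * braidGen n (i+1) := by
  have hi : i - 1 < n - 1 := by omega
  have hj : (i+1) - 1 < n - 1 := by omega
  have key := braid_rel_one (n := n) (r := FreeGroup.of (⟨i-1, hi⟩ : Fin (n-1)) *
      FreeGroup.of ⟨(i+1)-1, hj⟩ * FreeGroup.of ⟨i-1, hi⟩ *
      (FreeGroup.of ⟨(i+1)-1, hj⟩ * FreeGroup.of ⟨i-1, hi⟩ * FreeGroup.of ⟨(i+1)-1, hj⟩)⁻¹)
    (Or.inr ⟨⟨i-1, hi⟩, ⟨(i+1)-1, hj⟩, by simp; omega, rfl⟩)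
  simp only [map_mul, map_inv] at key
  rw [mul_inv_eq_one] at key
  rw [gen_eq i hi, gen_eq (i+1) hj]
  exact key

lemma bandConj_eq_one {n t s : ℕ} (h : t ≤ s + 1) : bandConj n t s = 1 := by
  have : t - 1 - s = 0 := by omega
  simp [bandConj, this]

lemma bandConj_head {n t s : ℕ} (h : s + 2 ≤ t) :
    bandConj n t s = braidGen n (t-1) * bandConj n (t-1) s := by
  have h1 : t - 1 - s = (t - 2 - s) + 1 := by omega
  rw [bandConj, h1, List.range_succ_eq_map, List.map_cons, List.prod_cons,
    List.map_map, Nat.sub_zero]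
  congr 1
  rw [bandConj]
  have h2 : t - 1 - 1 - s = t - 2 - s := by omega
  rw [h2]
  congr 1
  apply List.map_congr_left
  intro a ha
  simp only [Function.comp_apply]
  congr 1
  omega

lemma bandConj_tail {n t s : ℕ} (h : s + 2 ≤ t) :
    bandConj n t s = bandConj n t (s+1) * braidGen n (s+1) := by
  have h1 : t - 1 - s = (t - 1 - (s+1)) + 1 := by omega
  rw [bandConj, h1, List.range_succ]
  rw [List.map_append, List.prod_append, bandConj]
  congr 1
  simp only [List.map_cons, List.map_nil, List.prod_cons, List.prod_nil, mul_one]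
  congr 1
  omega

lemma bandConj_split {n : ℕ} (s r t : ℕ) (h1 : s ≤ r) (h2 : r + 1 ≤ t) :
    bandConj n t s = bandConj n t r * bandConj n (r+1) s := by
  induction t, h2 using Nat.le_induction with
  | base => rw [bandConj_eq_one (le_refl _), one_mul]
  | succ t ht ih =>
    have e1 := bandConj_head (n:=n) (s:=s) (t:=t+1) (by omega)
    have e2 := bandConj_head (n:=n) (s:=r) (t:=t+1) (by omega)
    simp only [Nat.add_sub_cancel] at e1 e2
    rw [e1, ih, e2, mul_assoc]

lemma gen_comm_bandConj_low {n : ℕ} (j t s : ℕ) (h1 : 1 ≤ j) (h2 : j + 2 ≤ s + 1)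
    (h3 : t ≤ n) : Commute (braidGen n j) (bandConj n t s) := by
  apply Commute.list_prod_right
  intro x hx
  simp only [List.mem_map, List.mem_range] at hx
  obtain ⟨k, hk, rfl⟩ := hx
  exact gen_comm j (t-1-k) h1 (by omega) (by omega)

lemma gen_comm_bandConj_high {n : ℕ} (j t s : ℕ) (h2 : t + 1 ≤ j) (h3 : j ≤ n - 1) :
    Commute (braidGen n j) (bandConj n t s) := by
  apply Commute.list_prod_right
  intro x hx
  simp only [List.mem_map, List.mem_range] at hx
  obtain ⟨k, hk, rfl⟩ := hx
  exact (gen_comm (t-1-k) j (by omega) (by omega) h3).symm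

lemma gen_comm_band_low {n : ℕ} (j t s : ℕ) (h1 : 1 ≤ j) (h2 : j + 2 ≤ s)
    (h3 : t ≤ n) (h4 : s + 1 ≤ t) : Commute (braidGen n j) (band n t s) := by
  unfold band
  have hc := gen_comm_bandConj_low (n:=n) j t s h1 (by omega) h3
  exact (hc.mul_right (gen_comm j s h1 h2 (by omega))).mul_right hc.inv_right

lemma band_comm_bandConj {n : ℕ} (t s r q : ℕ) (h1 : 1 ≤ s) (h2 : r + 1 ≤ s)
    (h3 : t ≤ n) (h4 : s + 1 ≤ t) : Commute (band n t s) (bandConj n r q) := by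
  apply Commute.list_prod_right
  intro x hx
  simp only [List.mem_map, List.mem_range] at hx
  obtain ⟨k, hk, rfl⟩ := hx
  exact (gen_comm_band_low (r-1-k) t s (by omega) (by omega) h3 h4).symm

lemma band_head {n t s : ℕ} (h : s + 1 ≤ t) :
    band n (t+1) s = braidGen n t * band n t s * (braidGen n t)⁻¹ := by
  have e := bandConj_head (n:=n) (s:=s) (t:=t+1) (by omega)
  simp only [Nat.add_sub_cancel] at e
  rw [band, band, e]
  group

lemma band_base {n s : ℕ} : band n (s+1) s = braidGen n s := by
  rw [band, bandConj_eq_one (le_refl _)]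
  group

-- L4 : the two forms of a band generator
lemma band_eq {n t s : ℕ} (h1 : 1 ≤ s) (h2 : s + 1 ≤ t) (h3 : t ≤ n) :
    band n t s = (bandConj n (t-1) (s-1))⁻¹ * braidGen n (t-1) * bandConj n (t-1) (s-1) := by
  induction t, h2 using Nat.le_induction with
  | base =>
    simp only [Nat.add_sub_cancel]
    rw [band_base, bandConj_eq_one (by omega : s ≤ (s-1) + 1)]
    group
  | succ t ht ih =>
    have ih' := ih (by omega)
    have hW := gen_comm_bandConj_high (n:=n) t (t-1) (s-1) (by omega) (by omega)
    have e2 : braidGen n t * braidGen n (t-1) * (braidGen n t)⁻¹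
        = (braidGen n (t-1))⁻¹ * braidGen n t * braidGen n (t-1) := by
      apply mul_left_cancel (a := braidGen n (t-1))
      have eb := gen_braid (n:=n) (t-1) (by omega) (by omega)
      rw [show t - 1 + 1 = t by omega] at eb
      calc braidGen n (t-1) * (braidGen n t * braidGen n (t-1) * (braidGen n t)⁻¹)
          = braidGen n (t-1) * braidGen n t * braidGen n (t-1) * (braidGen n t)⁻¹ := by
            group
        _ = braidGen n t * braidGen n (t-1) * braidGen n t * (braidGen n t)⁻¹ := by rw [eb]
        _ = braidGen n (t-1) * ((braidGen n (t-1))⁻¹ * braidGen n t * braidGen n (t-1)) := by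
            group
    have eW : bandConj n (t+1-1) (s-1) = braidGen n (t-1) * bandConj n (t-1) (s-1) := by
      have := bandConj_head (n:=n) (s:=s-1) (t:=t) (by omega)
      simpa using this
    rw [band_head (by omega), ih', eW]
    have c1 : braidGen n t * (bandConj n (t-1) (s-1))⁻¹
        = (bandConj n (t-1) (s-1))⁻¹ * braidGen n t := hW.inv_right.eq
    have c2 : bandConj n (t-1) (s-1) * (braidGen n t)⁻¹
        = (braidGen n t)⁻¹ * bandConj n (t-1) (s-1) := hW.symm.inv_right.eq
    calc braidGen n t * ((bandConj n (t-1) (s-1))⁻¹ * braidGen n (t-1) *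
            bandConj n (t-1) (s-1)) * (braidGen n t)⁻¹
        = (braidGen n t * (bandConj n (t-1) (s-1))⁻¹) * braidGen n (t-1) *
            (bandConj n (t-1) (s-1) * (braidGen n t)⁻¹) := by group
      _ = ((bandConj n (t-1) (s-1))⁻¹ * braidGen n t) * braidGen n (t-1) *
            ((braidGen n t)⁻¹ * bandConj n (t-1) (s-1)) := by rw [c1, c2]
      _ = (bandConj n (t-1) (s-1))⁻¹ * (braidGen n t * braidGen n (t-1) *
            (braidGen n t)⁻¹) * bandConj n (t-1) (s-1) := by group
      _ = (bandConj n (t-1) (s-1))⁻¹ * ((braidGen n (t-1))⁻¹ * braidGen n t *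
            braidGen n (t-1)) * bandConj n (t-1) (s-1) := by rw [e2]
      _ = (braidGen n (t-1) * bandConj n (t-1) (s-1))⁻¹ * braidGen n t *
            (braidGen n (t-1) * bandConj n (t-1) (s-1)) := by group

-- L3'
lemma gen_mul_band {n t s : ℕ} (h1 : 1 ≤ s) (h2 : s + 1 ≤ t) (h3 : t + 1 ≤ n) :
    braidGen n t * band n t s = band n t s * band n (t+1) s := by
  rw [band_head (by omega)]
  have e := band_eq (n:=n) h1 h2 (by omega)
  set W := bandConj n (t-1) (s-1) with hWdef
  have hW := gen_comm_bandConj_high (n:=n) t (t-1) (s-1) (by omega) (by omega)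
  have c1 : braidGen n t * W⁻¹ = W⁻¹ * braidGen n t := hW.inv_right.eq
  have c2 : W * (braidGen n t)⁻¹ = (braidGen n t)⁻¹ * W := hW.symm.inv_right.eq
  have c3 : W * braidGen n t = braidGen n t * W := hW.symm.eq
  have eb := gen_braid (n:=n) (t-1) (by omega) (by omega)
  rw [show t - 1 + 1 = t by omega] at eb
  rw [e]
  calc braidGen n t * (W⁻¹ * braidGen n (t-1) * W)
      = (braidGen n t * W⁻¹) * braidGen n (t-1) * W := by group
    _ = (W⁻¹ * braidGen n t) * braidGen n (t-1) * W := by rw [c1]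
    _ = W⁻¹ * (braidGen n t * braidGen n (t-1) * braidGen n t) *
          ((braidGen n t)⁻¹ * W) := by group
    _ = W⁻¹ * (braidGen n (t-1) * braidGen n t * braidGen n (t-1)) *
          ((braidGen n t)⁻¹ * W) := by rw [← eb]
    _ = (W⁻¹ * braidGen n (t-1) * W) * ((W⁻¹ * braidGen n t) * braidGen n (t-1) *
          ((braidGen n t)⁻¹ * W)) := by group
    _ = (W⁻¹ * braidGen n (t-1) * W) * ((braidGen n t * W⁻¹) * braidGen n (t-1) *
          (W * (braidGen n t)⁻¹)) := by rw [c1, c2]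
    _ = (W⁻¹ * braidGen n (t-1) * W) * (braidGen n t * (W⁻¹ * braidGen n (t-1) * W) *
          (braidGen n t)⁻¹) := by group

-- L1
lemma bandConj_eq_mul_band {n t s : ℕ} (h1 : 1 ≤ s) (h2 : s + 1 ≤ t) (h3 : t ≤ n) :
    bandConj n t (s-1) = bandConj n (t-1) (s-1) * band n t s := by
  induction t, h2 using Nat.le_induction with
  | base =>
    simp only [Nat.add_sub_cancel]
    have e := bandConj_head (n:=n) (s:=s-1) (t:=s+1) (by omega)
    simp only [Nat.add_sub_cancel] at e
    rw [e, bandConj_eq_one (by omega : s ≤ (s-1) + 1), band_base, mul_one, one_mul]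
  | succ t ht ih =>
    have ih' := ih (by omega)
    have e1 := bandConj_head (n:=n) (s:=s-1) (t:=t+1) (by omega)
    simp only [Nat.add_sub_cancel] at e1
    have hW := gen_comm_bandConj_high (n:=n) t (t-1) (s-1) (by omega) (by omega)
    have e3 := gen_mul_band (n:=n) (t:=t) (s:=s) h1 (by omega) (by omega)
    rw [e1, ih', ← mul_assoc, hW.eq, mul_assoc, e3, ← mul_assoc, ← ih', Nat.add_sub_cancel]

-- L2
lemma band_mul_gen {n t s : ℕ} (h1 : 2 ≤ s) (h2 : s + 1 ≤ t) (h3 : t ≤ n) :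
    band n t s * braidGen n (s-1) = band n t (s-1) * band n t s := by
  have etail := bandConj_tail (n:=n) (s:=s-1) (t:=t) (by omega)
  rw [show s - 1 + 1 = s by omega] at etail
  have hc := gen_comm_bandConj_low (n:=n) (s-1) t s (by omega) (by omega) h3
  have hs : s ≤ n - 1 := by omega
  set C := bandConj n t s with hC
  have c1 : (C:BraidGroup n)⁻¹ * braidGen n (s-1) = braidGen n (s-1) * C⁻¹ :=
    hc.symm.inv_left.eq
  rw [band, band, etail]
  calc C * braidGen n s * C⁻¹ * braidGen n (s-1)
      = C * braidGen n s * (C⁻¹ * braidGen n (s-1)) := by group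
    _ = C * braidGen n s * (braidGen n (s-1) * C⁻¹) := by rw [c1]
    _ = C * braidGen n s * braidGen n (s-1) * C⁻¹ := by group
    _ = (C * braidGen n s) * braidGen n (s-1) * (C * braidGen n s)⁻¹ *
          (C * braidGen n s * C⁻¹) := by group

lemma fundamentalBraid_eq (n : ℕ) : fundamentalBraid n = bandConj n n 0 := by
  rw [fundamentalBraid, bandConj, Nat.sub_zero]
  congr 1
  apply List.map_congr_left
  intro k hk
  simp only [List.mem_range] at hk
  have h1 : bandConj n (n-k) (n-k-1) = 1 := bandConj_eq_one (by omega)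
  rw [band, h1, one_mul, inv_one, mul_one]
  congr 1
  omega

lemma braidGen_mem {n k : ℕ} (h1 : 1 ≤ k) (h2 : k + 1 ≤ n) :
    braidGen n k ∈ bandSubmonoid n := by
  have : braidGen n k = band n (k+1) k := band_base.symm
  rw [this]
  exact Submonoid.subset_closure ⟨k+1, k, h2, by omega, h1, rfl⟩

lemma band_mem {n t s : ℕ} (hs : 1 ≤ s) (hst : s < t) (ht : t ≤ n) :
    band n t s ∈ bandSubmonoid n :=
  Submonoid.subset_closure ⟨t, s, ht, hst, hs, rfl⟩

lemma bandConj_mem {n t s : ℕ} (h : t ≤ n) : bandConj n t s ∈ bandSubmonoid n := by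
  apply Submonoid.list_prod_mem
  intro x hx
  simp only [List.mem_map, List.mem_range] at hx
  obtain ⟨k, hk, rfl⟩ := hx
  exact braidGen_mem (by omega) (by omega)


/-- For `n ≥ 2` and `n ≥ t > s ≥ 1`, the element `δ · a_{t,s}⁻¹` lies
in the submonoid of `B n` generated by the band generators; equivalently there is a
positive word `P_{t,s}` in the band generators with `a_{t,s}⁻¹ = δ⁻¹ P_{t,s}`. -/
theorem delta_mul_band_inv_positive (n t s : ℕ) (hn : 2 ≤ n)
    (htn : t ≤ n) (hst : s < t) (hs : 1 ≤ s) :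
    fundamentalBraid n * (band n t s)⁻¹ ∈ bandSubmonoid n := by
  have hsplit1 : bandConj n n 0 = bandConj n n (t-1) * bandConj n t 0 := by
    have := bandConj_split (n:=n) 0 (t-1) n (by omega) (by omega)
    rw [show t - 1 + 1 = t by omega] at this
    exact this
  rcases eq_or_lt_of_le hs with h1 | h2
  · -- s = 1
    have hs1 : s = 1 := h1.symm
    subst hs1
    have hL1 : bandConj n t 0 = bandConj n (t-1) 0 * band n t 1 := by
      have := bandConj_eq_mul_band (n:=n) (t:=t) (s:=1) le_rfl (by omega) htn
      simpa using this
    have : fundamentalBraid n * (band n t 1)⁻¹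
        = bandConj n n (t-1) * bandConj n (t-1) 0 := by
      rw [fundamentalBraid_eq, hsplit1, hL1]
      group
    rw [this]
    exact Submonoid.mul_mem _ (bandConj_mem le_rfl) (bandConj_mem (by omega))
  · -- s ≥ 2
    have hs2 : 2 ≤ s := h2
    have hsplit2 : bandConj n t 0 = bandConj n t (s-1) * bandConj n s 0 := by
      have := bandConj_split (n:=n) 0 (s-1) t (by omega) (by omega)
      rw [show s - 1 + 1 = s by omega] at this
      exact this
    have hL1 : bandConj n t (s-1) = bandConj n (t-1) (s-1) * band n t s :=
      bandConj_eq_mul_band hs (by omega) htn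
    have hhead : bandConj n s 0 = braidGen n (s-1) * bandConj n (s-1) 0 := by
      have := bandConj_head (n:=n) (s:=0) (t:=s) (by omega)
      exact this
    have hL2 : band n t s * braidGen n (s-1) = band n t (s-1) * band n t s :=
      band_mul_gen hs2 (by omega) htn
    have hcomm : band n t s * bandConj n (s-1) 0 = bandConj n (s-1) 0 * band n t s :=
      (band_comm_bandConj t s (s-1) 0 hs (by omega) htn (by omega)).eq
    have key : fundamentalBraid n * (band n t s)⁻¹
        = bandConj n n (t-1) * bandConj n (t-1) (s-1) * band n t (s-1) *
            bandConj n (s-1) 0 := by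
      rw [fundamentalBraid_eq, hsplit1, hsplit2, hL1, hhead]
      calc bandConj n n (t-1) * (bandConj n (t-1) (s-1) * band n t s *
              (braidGen n (s-1) * bandConj n (s-1) 0)) * (band n t s)⁻¹
          = bandConj n n (t-1) * (bandConj n (t-1) (s-1) * ((band n t s *
              braidGen n (s-1)) * bandConj n (s-1) 0)) * (band n t s)⁻¹ := by group
        _ = bandConj n n (t-1) * (bandConj n (t-1) (s-1) * ((band n t (s-1) *
              band n t s) * bandConj n (s-1) 0)) * (band n t s)⁻¹ := by rw [hL2]
        _ = bandConj n n (t-1) * bandConj n (t-1) (s-1) * band n t (s-1) *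
              (band n t s * bandConj n (s-1) 0) * (band n t s)⁻¹ := by group
        _ = bandConj n n (t-1) * bandConj n (t-1) (s-1) * band n t (s-1) *
              (bandConj n (s-1) 0 * band n t s) * (band n t s)⁻¹ := by rw [hcomm]
        _ = bandConj n n (t-1) * bandConj n (t-1) (s-1) * band n t (s-1) *
              bandConj n (s-1) 0 := by group
    rw [key]
    exact Submonoid.mul_mem _ (Submonoid.mul_mem _ (Submonoid.mul_mem _
      (bandConj_mem le_rfl) (bandConj_mem (by omega)))
      (band_mem (by omega) (by omega) htn)) (bandConj_mem (by omega))
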